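/- Let Z be a d-dimensional lattice zonotope in R^d with generator set G_Z (pairwise non-collinear primitive-direction lattice segments based at the origin), contained after translation in [0,k(Z)]^d with k(Z) minimal. Let H = H_1(d,p) be the zonotope generated by all segments from 0 to primitive points of Z^d with 1-norm ≤ p and first nonzero coordinate positive. If the number of generators of H is at most that of Z, then k(H) ≤ k(Z); if strictly fewer, then k(H) < k(Z); and if both the generator counts and the k values are equal, then Z is a lattice translate of H. -/

import Mathlib

open Filter Pointwise

def IsPrimitive {d : ℕ} (x : Fin d → ℤ) : Prop :=
  x ≠ 0 ∧ Finset.univ.gcd x = 1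

def FirstNonzeroPos {d : ℕ} (x : Fin d → ℤ) : Prop :=
  ∃ i, 0 < x i ∧ ∀ j, j < i → x j = 0

def norm1 {d : ℕ} (x : Fin d → ℤ) : ℕ := ∑ i, (x i).natAbs

noncomputable def zetaR (d : ℕ) : ℝ := ∑' n : ℕ, (1 : ℝ) / (n + 1) ^ d

noncomputable def primCount (d p : ℕ) : ℕ :=
  Nat.card {x : Fin d → ℤ // IsPrimitive x ∧ norm1 x ≤ p ∧ FirstNonzeroPos x}

noncomputable def zonotope {d : ℕ} (G : Finset (Fin d → ℝ)) : Set (Fin d → ℝ) :=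
  ∑ g ∈ G, segment ℝ 0 g

noncomputable def polytopeGraph {d : ℕ} (P : Set (Fin d → ℝ)) :
    SimpleGraph (Set.extremePoints ℝ P) where
  Adj u v := u ≠ v ∧ IsExtreme ℝ P (segment ℝ u.1 v.1)
  symm := by
    refine ⟨?_⟩
    intro u v h
    exact ⟨Ne.symm h.1, by rw [segment_symm]; exact h.2⟩
  loopless := by refine ⟨?_⟩; intro u h; exact h.1 rfl

noncomputable def graphDiam {d : ℕ} (P : Set (Fin d → ℝ)) : ℕ :=
  sSup {n | ∃ u v, (polytopeGraph P).dist u v = n}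

noncomputable def cube (d k : ℕ) : Set (Fin d → ℝ) :=
  {x | ∀ i, 0 ≤ x i ∧ x i ≤ k}

noncomputable def kOf {d : ℕ} (P : Set (Fin d → ℝ)) : ℕ :=
  sInf {k | ∃ t : Fin d → ℤ, ((fun i => (t i : ℝ)) +ᵥ P) ⊆ cube d k}

noncomputable def H1 (d p : ℕ) : Set (Fin d → ℝ) :=
  ∑ᶠ x ∈ {x : Fin d → ℤ | IsPrimitive x ∧ norm1 x ≤ p ∧ FirstNonzeroPos x},
    segment ℝ 0 (fun i => (x i : ℝ))
def cR (g : Fin d → ℤ) : Fin d → ℝ := fun i => (g i : ℝ)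

lemma cR_inj : Function.Injective (cR (d := d)) := by
  intro a b h
  funext i
  have : ((a i : ℝ)) = b i := congrFun h i
  exact_mod_cast this

lemma cR_add (a b : Fin d → ℤ) : cR (a + b) = cR a + cR b := by
  funext i; simp [cR]

lemma cR_neg (a : Fin d → ℤ) : cR (-a) = -cR a := by
  funext i; simp [cR]

lemma cR_sum {α : Type*} (G : Finset α) (f : α → Fin d → ℤ) :
    cR (∑ g ∈ G, f g) = ∑ g ∈ G, cR (f g) := by
  funext i; simp [cR, Finset.sum_apply]

/-- width in coordinate i -/
def Wt (G : Finset (Fin d → ℤ)) (i : Fin d) : ℕ := ∑ g ∈ G, (g i).natAbs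

lemma sum_norm1_eq (G : Finset (Fin d → ℤ)) : ∑ g ∈ G, norm1 g = ∑ i, Wt G i := by
  unfold norm1 Wt
  rw [Finset.sum_comm]

noncomputable def zs (G : Finset (Fin d → ℤ)) : Set (Fin d → ℝ) :=
  ∑ g ∈ G, segment ℝ 0 (cR g)

lemma zonotope_image (G : Finset (Fin d → ℤ)) :
    zonotope (G.image fun g => fun i => (g i : ℝ)) = zs G := by
  unfold zonotope zs
  exact Finset.sum_image (fun x _ y _ h => cR_inj h)

lemma mem_segment_iff {v x : Fin d → ℝ} :
    x ∈ segment ℝ 0 v ↔ ∃ c : ℝ, 0 ≤ c ∧ c ≤ 1 ∧ x = c • v := by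
  rw [segment_eq_image]
  constructor
  · rintro ⟨c, hc, rfl⟩
    exact ⟨c, hc.1, hc.2, by simp⟩
  · rintro ⟨c, h0, h1, rfl⟩
    exact ⟨c, ⟨h0, h1⟩, by simp⟩

lemma mem_zs_iff {G : Finset (Fin d → ℤ)} {x : Fin d → ℝ} :
    x ∈ zs G ↔ ∃ c : (Fin d → ℤ) → ℝ, (∀ g ∈ G, 0 ≤ c g ∧ c g ≤ 1) ∧
      x = ∑ g ∈ G, c g • cR g := by
  unfold zs
  rw [Set.mem_finset_sum]
  constructor
  · rintro ⟨f, hf, rfl⟩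
    classical
    choose! c h0 h1 hc using fun g (hg : g ∈ G) => mem_segment_iff.mp (hf hg)
    exact ⟨c, fun g hg => ⟨h0 g hg, h1 g hg⟩, Finset.sum_congr rfl fun g hg => hc g hg⟩
  · rintro ⟨c, hc, rfl⟩
    exact ⟨fun g => c g • cR g, fun {g} hg =>
      mem_segment_iff.mpr ⟨c g, (hc g hg).1, (hc g hg).2, rfl⟩, rfl⟩

lemma mem_vadd_set_iff {a x : Fin d → ℝ} {S : Set (Fin d → ℝ)} :
    x ∈ a +ᵥ S ↔ ∃ y ∈ S, x = a + y := by
  constructor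
  · rintro ⟨y, hy, rfl⟩; exact ⟨y, hy, rfl⟩
  · rintro ⟨y, hy, rfl⟩; exact ⟨y, hy, rfl⟩


lemma vadd_mem_cube {a : Fin d → ℝ} {S : Set (Fin d → ℝ)} {k : ℕ}
    (h : a +ᵥ S ⊆ cube d k) {y : Fin d → ℝ} (hy : y ∈ S) (i : Fin d) :
    0 ≤ a i + y i ∧ a i + y i ≤ k := by
  have : a + y ∈ cube d k := h ⟨y, hy, rfl⟩
  exact this i

/-- lower bound: every coordinate width is at most k -/
lemma width_le {G : Finset (Fin d → ℤ)} {k : ℕ} {t' : Fin d → ℤ}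
    (h : (cR t') +ᵥ zs G ⊆ cube d k) (i : Fin d) : Wt G i ≤ k := by
  classical
  set cp : (Fin d → ℤ) → ℝ := fun g => if 0 ≤ g i then 1 else 0 with hcp
  set cm : (Fin d → ℤ) → ℝ := fun g => if 0 ≤ g i then 0 else 1 with hcm
  have hv : (∑ g ∈ G, cp g • cR g) ∈ zs G :=
    mem_zs_iff.mpr ⟨cp, fun g _ => by by_cases h : 0 ≤ g i <;> simp [hcp, h], rfl⟩
  have hw : (∑ g ∈ G, cm g • cR g) ∈ zs G :=
    mem_zs_iff.mpr ⟨cm, fun g _ => by by_cases h : 0 ≤ g i <;> simp [hcm, h], rfl⟩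
  have h1 := (vadd_mem_cube h hv i).2
  have h2 := (vadd_mem_cube h hw i).1
  have hsum : (∑ g ∈ G, cp g • cR g) i - (∑ g ∈ G, cm g • cR g) i = (Wt G i : ℝ) := by
    simp only [Finset.sum_apply, Pi.smul_apply, smul_eq_mul, ← Finset.sum_sub_distrib]
    rw [Wt, Nat.cast_sum]
    refine Finset.sum_congr rfl fun g _ => ?_
    by_cases hgi : 0 ≤ g i
    · simp [hcp, hcm, cR, hgi, Nat.cast_natAbs, abs_of_nonneg (by exact_mod_cast hgi : (0:ℝ) ≤ (g i : ℝ))]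
    · push_neg at hgi
      have : (g i : ℝ) < 0 := by exact_mod_cast hgi
      simp [hcp, hcm, cR, not_le.mpr hgi, Nat.cast_natAbs, abs_of_neg this]
  have : (Wt G i : ℝ) ≤ (k : ℝ) := by
    rw [← hsum]; linarith
  exact_mod_cast this

lemma zs_subset_cube (G : Finset (Fin d → ℤ)) (k : ℕ) (hk : ∀ i, Wt G i ≤ k) :
    (cR (fun i => -∑ g ∈ G, min (g i) 0)) +ᵥ zs G ⊆ cube d k := by
  rintro x ⟨y, hy, rfl⟩
  obtain ⟨c, hc, rfl⟩ := mem_zs_iff.mp hy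
  intro i
  have hlo : ∀ g ∈ G, ((min (g i) 0 : ℤ) : ℝ) ≤ c g * (g i : ℝ) ∧
      c g * (g i : ℝ) ≤ ((max (g i) 0 : ℤ) : ℝ) := by
    intro g hg
    obtain ⟨h0, h1⟩ := hc g hg
    rcases le_or_gt 0 (g i) with hgi | hgi
    · rw [min_eq_right hgi, max_eq_left hgi]
      have h2 : (0:ℝ) ≤ (g i : ℝ) := by exact_mod_cast hgi
      exact ⟨by simpa using mul_nonneg h0 h2, by nlinarith⟩
    · rw [min_eq_left hgi.le, max_eq_right hgi.le]
      have h2 : (g i : ℝ) < 0 := by exact_mod_cast hgi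
      exact ⟨by nlinarith, by simpa using mul_nonpos_of_nonneg_of_nonpos h0 h2.le⟩
  have hyi : ((∑ g ∈ G, min (g i) 0 : ℤ) : ℝ) ≤ (∑ g ∈ G, c g • cR g) i ∧
      (∑ g ∈ G, c g • cR g) i ≤ ((∑ g ∈ G, max (g i) 0 : ℤ) : ℝ) := by
    simp only [Finset.sum_apply, Pi.smul_apply, smul_eq_mul, Int.cast_sum]
    exact ⟨Finset.sum_le_sum fun g hg => (hlo g hg).1,
      Finset.sum_le_sum fun g hg => (hlo g hg).2⟩
  have hWz : (∑ g ∈ G, max (g i) 0) - (∑ g ∈ G, min (g i) 0) = (Wt G i : ℤ) := by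
    rw [Wt, ← Finset.sum_sub_distrib, Nat.cast_sum]
    exact Finset.sum_congr rfl fun g _ => by omega
  have hWr : ((∑ g ∈ G, max (g i) 0 : ℤ) : ℝ) - ((∑ g ∈ G, min (g i) 0 : ℤ) : ℝ)
      = (Wt G i : ℝ) := by exact_mod_cast hWz
  have hki : (Wt G i : ℝ) ≤ k := by exact_mod_cast hk i
  have hcast : cR (fun i' => -∑ g ∈ G, min (g i') 0) i
      = -((∑ g ∈ G, min (g i) 0 : ℤ) : ℝ) := by
    simp only [cR, Int.cast_neg]
  constructor
  · show 0 ≤ cR _ i + _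
    rw [hcast]
    linarith [hyi.1]
  · show cR _ i + _ ≤ _
    rw [hcast]
    linarith [hyi.2, hyi.1]

lemma kOf_zs (G : Finset (Fin d → ℤ)) : kOf (zs G) = Finset.univ.sup (Wt G) := by
  have hne : Finset.univ.sup (Wt G) ∈
      {k | ∃ t : Fin d → ℤ, ((fun i => ((t i : ℝ))) +ᵥ zs G) ⊆ cube d k} :=
    ⟨_, zs_subset_cube G _ fun i => Finset.le_sup (Finset.mem_univ i)⟩
  refine le_antisymm (Nat.sInf_le hne) ?_
  have hmem := Nat.sInf_mem ⟨_, hne⟩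
  obtain ⟨t', ht'⟩ := hmem
  exact Finset.sup_le fun i _ => width_le ht' i

lemma kOf_vadd (a : Fin d → ℤ) (P : Set (Fin d → ℝ)) :
    kOf ((cR a) +ᵥ P) = kOf P := by
  unfold kOf
  congr 1
  ext k
  constructor
  · rintro ⟨t', h⟩
    refine ⟨t' + a, ?_⟩
    show (cR (t' + a)) +ᵥ P ⊆ cube d k
    have h' : (cR t') +ᵥ ((cR a) +ᵥ P) ⊆ cube d k := h
    rwa [vadd_vadd, ← cR_add] at h' 
  · rintro ⟨t', h⟩
    refine ⟨t' - a, ?_⟩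
    have : cR (t' - a) + cR a = cR t' := by rw [← cR_add]; simp
    show (cR (t' - a)) +ᵥ ((cR a) +ᵥ P) ⊆ _
    rw [vadd_vadd, this]
    exact h


lemma norm1_eq_zero {u : Fin d → ℤ} : norm1 u = 0 ↔ u = 0 := by
  unfold norm1
  rw [Finset.sum_eq_zero_iff]
  simp [funext_iff]

lemma norm1_smul (m : ℤ) (u : Fin d → ℤ) : norm1 (m • u) = m.natAbs * norm1 u := by
  unfold norm1
  rw [Finset.mul_sum]
  exact Finset.sum_congr rfl fun i _ => by simp [Int.natAbs_mul]

lemma norm1_neg (u : Fin d → ℤ) : norm1 (-u) = norm1 u := by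
  unfold norm1; exact Finset.sum_congr rfl fun i _ => by simp

lemma exists_first {u : Fin d → ℤ} (hu : u ≠ 0) : ∃ i, u i ≠ 0 ∧ ∀ j, j < i → u j = 0 := by
  classical
  have hne : (Finset.univ.filter fun i => u i ≠ 0).Nonempty := by
    obtain ⟨i, hi⟩ := Function.ne_iff.mp hu
    exact ⟨i, Finset.mem_filter.mpr ⟨Finset.mem_univ _, hi⟩⟩
  set S := Finset.univ.filter fun i => u i ≠ 0
  refine ⟨S.min' hne, (Finset.mem_filter.mp (S.min'_mem hne)).2, fun j hj => ?_⟩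
  by_contra hj0
  exact absurd (S.min'_le j (Finset.mem_filter.mpr ⟨Finset.mem_univ _, hj0⟩)) (not_le.mpr hj)

lemma fnp_or_neg {u : Fin d → ℤ} (hu : u ≠ 0) :
    FirstNonzeroPos u ∨ FirstNonzeroPos (-u) := by
  obtain ⟨i, hi, hz⟩ := exists_first hu
  rcases lt_or_gt_of_ne hi with h | h
  · right
    exact ⟨i, by simpa using h, fun j hj => by simp [hz j hj]⟩
  · left
    exact ⟨i, h, hz⟩

lemma fnp_not_both {u : Fin d → ℤ} (h1 : FirstNonzeroPos u) (h2 : FirstNonzeroPos (-u)) :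
    False := by
  obtain ⟨i, hi, hz⟩ := h1
  obtain ⟨i', hi', hz'⟩ := h2
  simp only [Pi.neg_apply] at hi' hz'
  rcases lt_trichotomy i i' with h | h | h
  · have := hz' i h; omega
  · subst h; omega
  · have := hz i' h; omega

lemma fnp_ne_zero {u : Fin d → ℤ} (h : FirstNonzeroPos u) : u ≠ 0 := by
  obtain ⟨i, hi, -⟩ := h
  intro h0
  rw [h0] at hi
  exact absurd hi (by simp)

lemma int_gcd_nonneg {β : Type*} (s : Finset β) (f : β → ℤ) : 0 ≤ s.gcd f := by
  rw [← Finset.normalize_gcd, ← Int.abs_eq_normalize]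
  exact abs_nonneg _

lemma gcd_comp (u : Fin d → ℤ) (σ : Equiv.Perm (Fin d)) :
    Finset.univ.gcd (fun j => u (σ j)) = Finset.univ.gcd u := by
  refine Int.dvd_antisymm (int_gcd_nonneg _ _) (int_gcd_nonneg _ _) ?_ ?_
  · refine Finset.dvd_gcd fun i _ => ?_
    have : u i = u (σ (σ.symm i)) := by simp
    rw [this]
    exact Finset.gcd_dvd (Finset.mem_univ _)
  · exact Finset.dvd_gcd fun j _ => Finset.gcd_dvd (Finset.mem_univ _)

lemma gcd_negf (u : Fin d → ℤ) : Finset.univ.gcd (-u) = Finset.univ.gcd u := by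
  refine Int.dvd_antisymm (int_gcd_nonneg _ _) (int_gcd_nonneg _ _) ?_ ?_
  · refine Finset.dvd_gcd fun i _ => ?_
    have := Finset.gcd_dvd (f := -u) (Finset.mem_univ i)
    simpa using (dvd_neg.mpr this)
  · refine Finset.dvd_gcd fun i _ => ?_
    have := Finset.gcd_dvd (f := u) (Finset.mem_univ i)
    exact (dvd_neg (α := ℤ)).mpr this

/-- existence of a primitive direction -/
lemma exists_prim_dir {g : Fin d → ℤ} (hg : g ≠ 0) :
    ∃ (u : Fin d → ℤ) (m : ℤ), IsPrimitive u ∧ FirstNonzeroPos u ∧ m ≠ 0 ∧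
      g = m • u ∧ norm1 g = m.natAbs * norm1 u := by
  set n := Finset.univ.gcd g with hn
  have hn0 : n ≠ 0 := by
    intro h
    apply hg
    funext i
    exact Finset.gcd_eq_zero_iff.mp h i (Finset.mem_univ i)
  have hnpos : 0 < n := lt_of_le_of_ne (int_gcd_nonneg _ _) (Ne.symm hn0)
  set u' : Fin d → ℤ := fun i => g i / n with hu'
  have hgu : ∀ i, g i = n * u' i := fun i =>
    (Int.mul_ediv_cancel' (Finset.gcd_dvd (Finset.mem_univ i))).symm
  have hgcd1 : Finset.univ.gcd u' = 1 := by
    have h1 : n = normalize n * Finset.univ.gcd u' := by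
      conv_lhs => rw [hn, show g = fun i => n * u' i from funext hgu]
      exact Finset.gcd_mul_left
    rw [Int.normalize_of_nonneg hnpos.le] at h1
    have h2 : n * Finset.univ.gcd u' = n * 1 := by rw [mul_one, ← h1]
    exact mul_left_cancel₀ hn0 h2
  have hu'0 : u' ≠ 0 := by
    intro h
    apply hg
    funext i
    rw [hgu i, h]; simp
  rcases fnp_or_neg hu'0 with hf | hf
  · refine ⟨u', n, ⟨hu'0, hgcd1⟩, hf, hn0, funext hgu, ?_⟩
    rw [show g = n • u' from funext hgu]
    exact norm1_smul n u'
  · have hgneg : g = (-n) • (-u') := by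
      funext i
      simp [hgu i]
    refine ⟨-u', -n, ⟨by simpa using hu'0, by rwa [gcd_negf]⟩, hf, by omega, hgneg, ?_⟩
    rw [hgneg, norm1_smul, norm1_neg]

/-- integrality of the collinearity factor against a primitive vector -/
lemma int_factor {u g : Fin d → ℤ} {c : ℝ} (hu : IsPrimitive u)
    (hgc : ∀ i, (g i : ℝ) = c * (u i : ℝ)) :
    ∃ m : ℤ, (∀ i, g i = m * u i) ∧ (m : ℝ) = c := by
  obtain ⟨i₀, hi₀⟩ := Function.ne_iff.mp hu.1
  simp only [Pi.zero_apply] at hi₀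
  have hcross : ∀ i j, g i * u j = g j * u i := by
    intro i j
    have : ((g i * u j : ℤ) : ℝ) = ((g j * u i : ℤ) : ℝ) := by
      push_cast
      rw [hgc i, hgc j]; ring
    exact_mod_cast this
  have hdvd : u i₀ ∣ g i₀ := by
    have h1 : u i₀ ∣ Finset.univ.gcd (fun j => g i₀ * u j) :=
      Finset.dvd_gcd fun j _ => ⟨g j, by rw [hcross i₀ j]; ring⟩
    have h2 : Finset.univ.gcd (fun j => g i₀ * u j) = normalize (g i₀) := by
      rw [show (fun j => g i₀ * u j) = fun j => g i₀ * u j from rfl]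
      rw [Finset.gcd_mul_left, hu.2, mul_one]
    rw [h2] at h1
    exact h1.trans (normalize_dvd_iff.mpr dvd_rfl)
  obtain ⟨m, hm⟩ := hdvd
  have hui₀ : (u i₀ : ℝ) ≠ 0 := by exact_mod_cast hi₀
  have hall : ∀ i, g i = m * u i := by
    intro i
    have h3 : g i * u i₀ = (m * u i) * u i₀ := by
      rw [hcross i i₀, hm]; ring
    exact mul_right_cancel₀ hi₀ h3
  refine ⟨m, hall, ?_⟩
  have h4 : (g i₀ : ℝ) = c * u i₀ := hgc i₀
  have h5 : (g i₀ : ℝ) = m * u i₀ := by rw [hall i₀]; push_cast; ring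
  exact mul_right_cancel₀ hui₀ (h5.symm.trans h4)

lemma prim_fnp_collinear_eq {u w : Fin d → ℤ} {c : ℝ}
    (hu : IsPrimitive u) (hfu : FirstNonzeroPos u)
    (hw : IsPrimitive w) (hfw : FirstNonzeroPos w)
    (h : ∀ i, (w i : ℝ) = c * (u i : ℝ)) : w = u := by
  obtain ⟨m, hm, hmc⟩ := int_factor hu h
  have hm0 : m ≠ 0 := by
    intro h0
    apply hw.1
    funext i
    simp [hm i, h0]
  have hc0 : c ≠ 0 := by rw [← hmc]; exact_mod_cast hm0
  have h' : ∀ i, (u i : ℝ) = c⁻¹ * (w i : ℝ) := by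
    intro i
    rw [h i]
    field_simp
  obtain ⟨m', hm', -⟩ := int_factor hw h'
  obtain ⟨i₀, hi₀⟩ := Function.ne_iff.mp hu.1
  simp only [Pi.zero_apply] at hi₀
  have : u i₀ = m' * (m * u i₀) := by rw [← hm i₀, ← hm' i₀]
  have hmm : m' * m = 1 := by
    have h6 : u i₀ * 1 = u i₀ * (m' * m) := by linarith [this]
    exact (mul_left_cancel₀ hi₀ h6).symm
  have : m = 1 ∨ m = -1 := Int.isUnit_iff.mp (IsUnit.of_mul_eq_one (a := m) m' (by linarith [hmm]))
  rcases this with rfl | rfl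
  · funext i; rw [hm i, one_mul]
  · exfalso
    apply fnp_not_both hfu
    have : -u = w := by funext i; simp [hm i]
    rwa [this]


def PCond (d p : ℕ) (x : Fin d → ℤ) : Prop :=
  IsPrimitive x ∧ norm1 x ≤ p ∧ FirstNonzeroPos x

open Classical in
noncomputable def GH (d p : ℕ) : Finset (Fin d → ℤ) :=
  (Finset.Icc (fun _ => -(p:ℤ)) (fun _ => (p:ℤ))).filter (PCond d p)

lemma natAbs_le_norm1 (x : Fin d → ℤ) (i : Fin d) : (x i).natAbs ≤ norm1 x :=
  Finset.single_le_sum (f := fun i => (x i).natAbs) (fun _ _ => Nat.zero_le _)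
    (Finset.mem_univ i)

lemma mem_GH {p : ℕ} {x : Fin d → ℤ} : x ∈ GH d p ↔ PCond d p x := by
  classical
  unfold GH
  rw [Finset.mem_filter]
  constructor
  · exact fun h => h.2
  · intro h
    refine ⟨Finset.mem_Icc.mpr ⟨fun i => ?_, fun i => ?_⟩, h⟩
    · have := (natAbs_le_norm1 x i).trans h.2.1
      simp only
      omega
    · have := (natAbs_le_norm1 x i).trans h.2.1
      simp only
      omega

lemma H1_eq (d p : ℕ) : H1 d p = zs (GH d p) := by
  unfold H1 zs
  have hS : {x : Fin d → ℤ | IsPrimitive x ∧ norm1 x ≤ p ∧ FirstNonzeroPos x}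
      = ↑(GH d p) := by
    ext x
    simp only [Set.mem_setOf_eq, Finset.coe_sort_coe, Finset.mem_coe, mem_GH]
    rfl
  rw [hS, finsum_mem_coe_finset]
  rfl

lemma primCount_eq (d p : ℕ) : primCount d p = (GH d p).card := by
  unfold primCount
  have h1 : Nat.card {x : Fin d → ℤ // IsPrimitive x ∧ norm1 x ≤ p ∧ FirstNonzeroPos x}
      = ({x : Fin d → ℤ | IsPrimitive x ∧ norm1 x ≤ p ∧ FirstNonzeroPos x} : Set _).ncard :=
    Nat.card_coe_set_eq _
  rw [h1]
  have hS : {x : Fin d → ℤ | IsPrimitive x ∧ norm1 x ≤ p ∧ FirstNonzeroPos x}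
      = ↑(GH d p) := by
    ext x
    simp only [Set.mem_setOf_eq, Finset.mem_coe, mem_GH]
    rfl
  rw [hS, Set.ncard_coe_finset]

open Classical in
noncomputable def fixv (v : Fin d → ℤ) : Fin d → ℤ :=
  if FirstNonzeroPos v then v else -v

lemma fixv_spec (v : Fin d → ℤ) : fixv v = v ∨ fixv v = -v := by
  unfold fixv; split <;> simp

lemma fixv_fnp {v : Fin d → ℤ} (hv : v ≠ 0) : FirstNonzeroPos (fixv v) := by
  unfold fixv
  split
  · assumption
  · rcases fnp_or_neg hv with h | h
    · contradiction
    · exact h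

lemma fixv_eq {v : Fin d → ℤ} (hv : FirstNonzeroPos v) : fixv v = v := if_pos hv

lemma fixv_neg {v : Fin d → ℤ} (hv : FirstNonzeroPos v) : fixv (-v) = v := by
  unfold fixv
  split
  · exact absurd ‹_› (fun h => fnp_not_both hv h)
  · simp

lemma tau_mem {p : ℕ} (σ : Equiv.Perm (Fin d)) {u : Fin d → ℤ} (hu : u ∈ GH d p) :
    fixv (fun a => u (σ a)) ∈ GH d p := by
  obtain ⟨⟨hu0, hugcd⟩, hun, hufnp⟩ := mem_GH.mp hu
  have hv0 : (fun a => u (σ a)) ≠ 0 := by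
    intro h
    apply hu0
    funext a
    have := congrFun h (σ.symm a)
    simpa using this
  have hnorm : norm1 (fun a => u (σ a)) = norm1 u := Equiv.sum_comp σ (fun a => (u a).natAbs)
  have hgcd : Finset.univ.gcd (fun a => u (σ a)) = 1 := by rw [gcd_comp u σ]; exact hugcd
  refine mem_GH.mpr ⟨⟨fnp_ne_zero (fixv_fnp hv0), ?_⟩, ?_, fixv_fnp hv0⟩
  · rcases fixv_spec (fun a => u (σ a)) with h | h
    · rw [h]; exact hgcd
    · rw [h, gcd_negf]; exact hgcd
  · rcases fixv_spec (fun a => u (σ a)) with h | h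
    · rw [h, hnorm]; exact hun
    · rw [h, norm1_neg, hnorm]; exact hun

lemma tau_tau (σ : Equiv.Perm (Fin d)) (hσσ : ∀ a, σ (σ a) = a) {u : Fin d → ℤ}
    (hufnp : FirstNonzeroPos u) :
    fixv (fun a => fixv (fun b => u (σ b)) (σ a)) = u := by
  rcases fixv_spec (fun b => u (σ b)) with h | h
  · have e : (fun a => fixv (fun b => u (σ b)) (σ a)) = u := by
      funext a
      rw [h]
      show u (σ (σ a)) = u a
      rw [hσσ]
    rw [e]
    exact fixv_eq hufnp
  · have e : (fun a => fixv (fun b => u (σ b)) (σ a)) = -u := by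
      funext a
      rw [h]
      show -(u (σ (σ a))) = -(u a)
      rw [hσσ]
    rw [e]
    exact fixv_neg hufnp

lemma Wt_GH_eq (p : ℕ) (i j : Fin d) : Wt (GH d p) i = Wt (GH d p) j := by
  classical
  have hσσ : ∀ a, Equiv.swap i j (Equiv.swap i j a) = a := fun a => Equiv.swap_apply_self i j a
  refine Finset.sum_nbij' (fun u => fixv (fun a => u (Equiv.swap i j a)))
      (fun u => fixv (fun a => u (Equiv.swap i j a)))
      (fun u hu => tau_mem _ hu) (fun u hu => tau_mem _ hu)
      (fun u hu => tau_tau _ hσσ (mem_GH.mp hu).2.2) (fun u hu => tau_tau _ hσσ (mem_GH.mp hu).2.2)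
      (fun u hu => ?_)
  show (u i).natAbs = ((fixv fun a => u (Equiv.swap i j a)) j).natAbs
  rcases fixv_spec (fun a => u (Equiv.swap i j a)) with h | h
  · rw [h]
    show (u i).natAbs = (u (Equiv.swap i j j)).natAbs
    rw [Equiv.swap_apply_right]
  · rw [h]
    show (u i).natAbs = (-(u (Equiv.swap i j j))).natAbs
    rw [Equiv.swap_apply_right, Int.natAbs_neg]


lemma vadd_set_add' (a : Fin d → ℝ) (S T : Set (Fin d → ℝ)) :
    (a +ᵥ S) + T = a +ᵥ (S + T) := by
  ext x
  simp only [Set.mem_add, mem_vadd_set_iff]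
  constructor
  · rintro ⟨y, hy, z, hz, rfl⟩
    obtain ⟨y', hy', rfl⟩ := hy
    exact ⟨y' + z, ⟨y', hy', z, hz, rfl⟩, by abel⟩
  · rintro ⟨w, ⟨y, hy, z, hz, rfl⟩, rfl⟩
    exact ⟨a + y, ⟨y, hy, rfl⟩, z, hz, by abel⟩

lemma sum_vadd_sets {α : Type*} [DecidableEq α] (G : Finset α) (b : α → Fin d → ℝ)
    (S : α → Set (Fin d → ℝ)) :
    ∑ g ∈ G, (b g +ᵥ S g) = (∑ g ∈ G, b g) +ᵥ ∑ g ∈ G, S g := by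
  induction G using Finset.induction with
  | empty => simp
  | insert a G hnotmem ih =>
    rw [Finset.sum_insert hnotmem, Finset.sum_insert hnotmem, Finset.sum_insert hnotmem, ih]
    ext x
    simp only [Set.mem_add, mem_vadd_set_iff]
    constructor
    · rintro ⟨y, ⟨y', hy', rfl⟩, z, ⟨w, hw, rfl⟩, rfl⟩
      exact ⟨y' + w, ⟨y', hy', w, hw, rfl⟩, by abel⟩
    · rintro ⟨w, ⟨y, hy, z, hz, rfl⟩, rfl⟩
      exact ⟨_, ⟨y, hy, rfl⟩, _, ⟨z, hz, rfl⟩, by abel⟩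

lemma segment_neg' (v : Fin d → ℝ) : segment ℝ 0 (-v) = (-v) +ᵥ segment ℝ 0 v := by
  ext x
  rw [mem_segment_iff, mem_vadd_set_iff]
  constructor
  · rintro ⟨c, h0, h1, rfl⟩
    refine ⟨(1 - c) • v, mem_segment_iff.mpr ⟨1 - c, by linarith, by linarith, rfl⟩, ?_⟩
    funext i
    simp only [Pi.smul_apply, Pi.neg_apply, Pi.add_apply, smul_eq_mul]
    ring
  · rintro ⟨y, hy, rfl⟩
    obtain ⟨c, h0, h1, rfl⟩ := mem_segment_iff.mp hy
    refine ⟨1 - c, by linarith, by linarith, ?_⟩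
    funext i
    simp only [Pi.smul_apply, Pi.neg_apply, Pi.add_apply, smul_eq_mul]
    ring

def Collin (u g : Fin d → ℤ) : Prop := ∃ c : ℝ, ∀ i, (g i : ℝ) = c * (u i : ℝ)

lemma collin_factor {u g : Fin d → ℤ} (hu : IsPrimitive u) (h : Collin u g) :
    ∃ m : ℤ, ∀ i, g i = m * u i := by
  obtain ⟨c, hc⟩ := h
  obtain ⟨m, hm, -⟩ := int_factor hu hc
  exact ⟨m, hm⟩

lemma collin_norm_le {u g : Fin d → ℤ} (hu : IsPrimitive u) (hg : g ≠ 0) (h : Collin u g) :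
    norm1 u ≤ norm1 g ∧ (norm1 g = norm1 u → g = u ∨ g = -u) := by
  obtain ⟨m, hm⟩ := collin_factor hu h
  have hgm : g = m • u := funext fun i => by simpa using hm i
  have hm0 : m ≠ 0 := by
    rintro rfl
    apply hg
    funext i
    simpa using hm i
  have hnorm : norm1 g = m.natAbs * norm1 u := by rw [hgm, norm1_smul]
  have hma : 1 ≤ m.natAbs := by omega
  constructor
  · rw [hnorm]
    exact Nat.le_mul_of_pos_left _ (by omega)
  · intro heq
    have hnu : norm1 u ≠ 0 := fun h0 => hu.1 (norm1_eq_zero.mp h0)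
    have : m.natAbs = 1 := by
      rw [hnorm] at heq
      rcases Nat.eq_zero_or_pos (norm1 u) with h0 | h0
      · exact absurd h0 hnu
      · nlinarith [heq, hma]
    rcases Int.natAbs_eq_iff.mp this with h1 | h1
    · left; rw [hgm, h1]; simp
    · right; rw [hgm, h1]; funext i; simp


/-- Comparison of a d-dimensional lattice zonotope Z with the primitive zonotope
H₁(d,p): if H₁(d,p) has at most as many generators as Z then k(H₁(d,p)) ≤ k(Z);
strictly fewer generators give a strict inequality; and equality of both generator
counts and k-values forces Z to be a lattice translate of H₁(d,p). -/
theorem stmt_16 (d p : ℕ) (hd : 2 ≤ d) (hp : 1 ≤ p)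
    (GZ : Finset (Fin d → ℤ)) (hGZ0 : (0 : Fin d → ℤ) ∉ GZ)
    (hnc : (GZ : Set (Fin d → ℤ)).Pairwise fun g g' =>
      ∀ c : ℝ, (fun i => (g' i : ℝ)) ≠ c • fun i => (g i : ℝ))
    (hdim : Submodule.span ℝ ((fun g : Fin d → ℤ => fun i => (g i : ℝ)) '' GZ) = ⊤)
    (Z : Set (Fin d → ℝ)) (t : Fin d → ℤ)
    (hZ : Z = (fun i => (t i : ℝ)) +ᵥ zonotope (GZ.image fun g => fun i => (g i : ℝ))) :
    (primCount d p ≤ GZ.card → kOf (H1 d p) ≤ kOf Z) ∧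
    (primCount d p < GZ.card → kOf (H1 d p) < kOf Z) ∧
    (primCount d p = GZ.card → kOf (H1 d p) = kOf Z →
      ∃ s : Fin d → ℤ, Z = (fun i => (s i : ℝ)) +ᵥ H1 d p) := by
  classical
  have hd0 : 0 < d := by omega
  -- kOf Z as max width
  have hZ' : kOf Z = Finset.univ.sup (Wt GZ) := by
    rw [hZ, show (fun i => (t i : ℝ)) = cR t from rfl, kOf_vadd, zonotope_image, kOf_zs]
  have hkZ : ∑ g ∈ GZ, norm1 g ≤ d * kOf Z := by
    rw [hZ', sum_norm1_eq]
    calc ∑ i, Wt GZ i ≤ ∑ _i : Fin d, Finset.univ.sup (Wt GZ) :=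
          Finset.sum_le_sum fun i _ => Finset.le_sup (Finset.mem_univ i)
      _ = d * Finset.univ.sup (Wt GZ) := by
          rw [Finset.sum_const, Finset.card_univ, Fintype.card_fin, smul_eq_mul]
  -- kOf H1 exactly
  set i0 : Fin d := ⟨0, hd0⟩ with hi0
  have hkH : d * kOf (H1 d p) = ∑ g ∈ GH d p, norm1 g := by
    rw [H1_eq, kOf_zs, sum_norm1_eq]
    have hsup : Finset.univ.sup (Wt (GH d p)) = Wt (GH d p) i0 :=
      le_antisymm (Finset.sup_le fun i _ => le_of_eq (Wt_GH_eq p i i0))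
        (Finset.le_sup (Finset.mem_univ _))
    rw [hsup, show (∑ i, Wt (GH d p) i) = ∑ _i : Fin d, Wt (GH d p) i0 from
      Finset.sum_congr rfl fun i _ => Wt_GH_eq p i i0]
    rw [Finset.sum_const, Finset.card_univ, Fintype.card_fin, smul_eq_mul]
  -- the injection from generators of H to generators of Z
  set F : (Fin d → ℤ) → (Fin d → ℤ) :=
    fun u => if h : ∃ g ∈ GZ, Collin u g then h.choose else 0 with hFdef
  set A : Finset (Fin d → ℤ) := (GH d p).filter (fun u => ∃ g ∈ GZ, Collin u g) with hA
  have hAsub : A ⊆ GH d p := Finset.filter_subset _ _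
  have hFmem : ∀ u ∈ A, F u ∈ GZ ∧ Collin u (F u) := by
    intro u hu
    have h := (Finset.mem_filter.mp hu).2
    rw [hFdef]
    simp only [dif_pos h]
    exact ⟨h.choose_spec.1, h.choose_spec.2⟩
  have hne0 : ∀ g ∈ GZ, g ≠ 0 := fun g hg h0 => hGZ0 (h0 ▸ hg)
  have huniq : ∀ u ∈ A, ∀ g ∈ GZ, Collin u g → g = F u := by
    intro u hu g hg hcol
    by_contra hne
    obtain ⟨hFZ, cF, hcF⟩ := hFmem u hu
    obtain ⟨cg, hcg⟩ := hcol
    have hcg0 : cg ≠ 0 := by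
      rintro rfl
      apply hne0 g hg
      funext i
      have := hcg i
      simp only [zero_mul] at this
      exact_mod_cast this
    apply hnc hg hFZ hne (cF / cg)
    funext i
    show (F u i : ℝ) = (cF / cg) * (g i : ℝ)
    rw [hcF i, hcg i]
    field_simp
  have hinj : Set.InjOn F ↑A := by
    intro u hu u' hu' hFeq
    have huA : u ∈ A := hu
    have huA' : u' ∈ A := hu'
    obtain ⟨hFZ, cF, hcF⟩ := hFmem u huA
    obtain ⟨hFZ', cF', hcF'⟩ := hFmem u' huA'
    obtain ⟨hup, hun, huf⟩ := mem_GH.mp (hAsub huA)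
    obtain ⟨hup', hun', huf'⟩ := mem_GH.mp (hAsub huA')
    have hcF'0 : cF' ≠ 0 := by
      rintro rfl
      apply hne0 _ hFZ'
      funext i
      have := hcF' i
      simp only [zero_mul] at this
      exact_mod_cast this
    have key : ∀ i, (u' i : ℝ) = (cF / cF') * (u i : ℝ) := by
      intro i
      have h3 : (F u' i : ℝ) = cF * u i := by rw [← hFeq]; exact hcF i
      have h4 : cF' * (u' i : ℝ) = cF * u i := (hcF' i).symm.trans h3
      field_simp
      linear_combination h4
    exact (prim_fnp_collinear_eq hup huf hup' huf' key).symm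
  have hcover : ∀ g ∈ GZ, norm1 g ≤ p → g ∈ A.image F := by
    intro g hg hgp
    obtain ⟨u, m, hup, huf, hm0, hgm, hnorm⟩ := exists_prim_dir (hne0 g hg)
    have hun : norm1 u ≤ p :=
      le_trans (by rw [hnorm]; exact Nat.le_mul_of_pos_left _ (Int.natAbs_pos.mpr hm0)) hgp
    have hcol : Collin u g := by
      refine ⟨(m : ℝ), fun i => ?_⟩
      have : g i = m * u i := by rw [hgm]; simp
      rw [this]; push_cast; ring
    have huA : u ∈ A := Finset.mem_filter.mpr ⟨mem_GH.mpr ⟨hup, hun, huf⟩, g, hg, hcol⟩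
    exact Finset.mem_image.mpr ⟨u, huA, (huniq u huA g hg hcol).symm⟩
  set imF := A.image F with himF
  set B := (GH d p).filter (fun u => ¬ ∃ g ∈ GZ, Collin u g) with hB
  set D := GZ \ imF with hD
  have himFsub : imF ⊆ GZ := by
    intro g hg
    obtain ⟨u, hu, rfl⟩ := Finset.mem_image.mp hg
    exact (hFmem u hu).1
  have hcards : A.card + B.card = (GH d p).card :=
    Finset.card_filter_add_card_filter_not _
  have hcardimF : imF.card = A.card := Finset.card_image_of_injOn hinj
  have hcardD : D.card + imF.card = GZ.card := Finset.card_sdiff_add_card_eq_card himFsub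
  have hsumGH : ∑ u ∈ A, norm1 u + ∑ u ∈ B, norm1 u = ∑ u ∈ GH d p, norm1 u :=
    Finset.sum_filter_add_sum_filter_not _ _ _
  have hsumGZ : ∑ g ∈ D, norm1 g + ∑ g ∈ imF, norm1 g = ∑ g ∈ GZ, norm1 g :=
    Finset.sum_sdiff himFsub
  have hsumimF : ∑ g ∈ imF, norm1 g = ∑ u ∈ A, norm1 (F u) :=
    Finset.sum_image fun x hx y hy h => hinj hx hy h
  have hAle : ∀ u ∈ A, norm1 u ≤ norm1 (F u) := by
    intro u hu
    obtain ⟨hFZ, hcol⟩ := hFmem u hu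
    exact (collin_norm_le (mem_GH.mp (hAsub hu)).1 (hne0 _ hFZ) hcol).1
  have hsumA_le : ∑ u ∈ A, norm1 u ≤ ∑ u ∈ A, norm1 (F u) := Finset.sum_le_sum hAle
  have hsumB_le : ∑ u ∈ B, norm1 u ≤ B.card * p := by
    have := Finset.sum_le_card_nsmul B norm1 p
      (fun u hu => (mem_GH.mp (Finset.filter_subset _ _ hu)).2.1)
    simpa [smul_eq_mul] using this
  have hsumD_ge : D.card * (p + 1) ≤ ∑ g ∈ D, norm1 g := by
    have hDbig : ∀ g ∈ D, p + 1 ≤ norm1 g := by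
      intro g hg
      obtain ⟨hgZ, hgni⟩ := Finset.mem_sdiff.mp hg
      by_contra hlt
      exact hgni (hcover g hgZ (by omega))
    have := Finset.card_nsmul_le_sum D norm1 (p + 1) hDbig
    simpa [smul_eq_mul] using this
  refine ⟨?_, ?_, ?_⟩
  · -- ≤ case
    intro hcard
    rw [primCount_eq] at hcard
    have hBD : B.card ≤ D.card := by omega
    have h1 : B.card * p ≤ D.card * (p + 1) := Nat.mul_le_mul hBD (by omega)
    have hSS : ∑ u ∈ GH d p, norm1 u ≤ ∑ g ∈ GZ, norm1 g := by omega
    exact Nat.le_of_mul_le_mul_left (by omega) hd0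
  · -- < case
    intro hcard
    rw [primCount_eq] at hcard
    have hBD : B.card + 1 ≤ D.card := by omega
    have h1 : B.card * p < D.card * (p + 1) :=
      lt_of_lt_of_le (by nlinarith) (Nat.mul_le_mul hBD (le_refl (p + 1)))
    have hSS : ∑ u ∈ GH d p, norm1 u < ∑ g ∈ GZ, norm1 g := by omega
    exact Nat.lt_of_mul_lt_mul_left (a := d) (by omega)
  · -- equality case
    intro hcard hk
    rw [primCount_eq] at hcard
    have hBD : B.card = D.card := by omega
    have hdk : d * kOf (H1 d p) = d * kOf Z := by rw [hk]
    -- all inequalities are equalities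
    have hB0 : B.card = 0 := by
      by_contra hB0
      have h1 : B.card * p < D.card * (p + 1) := by
        rw [← hBD]; nlinarith [Nat.pos_of_ne_zero hB0]
      omega
    have hD0 : D.card = 0 := by omega
    have hBempty : B = ∅ := Finset.card_eq_zero.mp hB0
    have hsumB0 : ∑ u ∈ B, norm1 u = 0 := by rw [hBempty]; simp
    have hDempty : D = ∅ := Finset.card_eq_zero.mp hD0
    have hsumD0 : ∑ g ∈ D, norm1 g = 0 := by rw [hDempty]; simp
    have hAeq : A = GH d p := Finset.eq_of_subset_of_card_le hAsub (by omega)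
    have himFeq : imF = GZ := Finset.eq_of_subset_of_card_le himFsub (by omega)
    have hsumEq : ∑ u ∈ A, norm1 u = ∑ u ∈ A, norm1 (F u) := by omega
    have hnormEq : ∀ u ∈ A, norm1 u = norm1 (F u) :=
      (Finset.sum_eq_sum_iff_of_le hAle).mp hsumEq
    have hFu : ∀ u ∈ A, F u = u ∨ F u = -u := by
      intro u hu
      obtain ⟨hFZ, hcol⟩ := hFmem u hu
      exact (collin_norm_le (mem_GH.mp (hAsub hu)).1 (hne0 _ hFZ) hcol).2
        ((hnormEq u hu).symm)
    set b : (Fin d → ℤ) → (Fin d → ℤ) := fun u => if F u = u then 0 else -u with hb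
    have hseg : ∀ u ∈ A, segment ℝ 0 (cR (F u)) = cR (b u) +ᵥ segment ℝ 0 (cR u) := by
      intro u hu
      by_cases h' : F u = u
      · simp only [hb, if_pos h', h']
        have h0 : cR (0 : Fin d → ℤ) = 0 := by funext i; simp [cR]
        rw [h0, zero_vadd]
      · have h : F u = -u := (hFu u hu).resolve_left h'
        simp only [hb, if_neg h']
        rw [h, cR_neg, segment_neg']
    have hzseq : zs GZ = cR (∑ u ∈ A, b u) +ᵥ zs (GH d p) := by
      have h1 : zs GZ = ∑ u ∈ A, segment ℝ 0 (cR (F u)) := by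
        rw [← himFeq, himF]
        exact Finset.sum_image fun x hx y hy h => hinj hx hy h
      rw [h1, Finset.sum_congr rfl hseg, sum_vadd_sets, ← cR_sum, hAeq]
      rfl
    refine ⟨t + ∑ u ∈ A, b u, ?_⟩
    rw [hZ, zonotope_image, hzseq, H1_eq]
    rw [show (fun i => (t i : ℝ)) = cR t from rfl, vadd_vadd, ← cR_add]
    rfl
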